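/- arXiv:1510.02032 — 9 statements merged into one kernel-verified Lean document; each statement's English description precedes it below -/
import Mathlib

section
/- For all integers k ≥ 2 and n > k, there exist a prime power q and an (n,k,k) linear exact-repair regeneration code over 𝔽_q with parameters (α,β,F) = (k, k−1, k²−1); that is, there exist a (k²−1)-dimensional 𝔽_q-vector space 𝓕 and subspaces W_1,…,W_n of 𝓕, each of dimension at most k, that satisfy the data-recovery property and the node-repair property with repair dimension k−1. -/
/-- An `(card ι, k, d)` linear exact-repair regeneration code with parameters
`(α, β, F)` over a field `K`: an `F`-dimensional ambient space `V` with node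
subspaces `W i` of dimension at most `α`, such that any `k` nodes span `V`
(data recovery), and any node can be repaired from any `d` other nodes, each
contributing a subspace of dimension at most `β` (node repair). -/
def IsERCode {K : Type} [Field K] {V : Type} [AddCommGroup V] [Module K V]
    {ι : Type} (k d α β F : ℕ) (W : ι → Submodule K V) : Prop :=
  FiniteDimensional K V ∧
  Module.finrank K V = F ∧
  (∀ i, Module.finrank K (W i) ≤ α) ∧
  (∀ A : Finset ι, A.card = k → ∑ j ∈ A, W j = ⊤) ∧
  (∀ (x : ι) (A : Finset ι), x ∉ A → A.card = d →
    ∃ S : ι → Submodule K V,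
      (∀ j ∈ A, S j ≤ W j ∧ Module.finrank K (S j) ≤ β) ∧
      W x ≤ ∑ j ∈ A, S j)

/-- Append a new node `Wst` to the family `W`, giving a family indexed by `Option ι`. -/
def extendCode {K : Type} [Field K] {V : Type} [AddCommGroup V] [Module K V]
    {ι : Type} (W : ι → Submodule K V) (Wst : Submodule K V) :
    Option ι → Submodule K V :=
  fun o => o.elim Wst W

section Aux

open Module

variable {K : Type} [Field K] {k n : ℕ}

/-- `vecMulVec` as a linear map in the second argument. -/
noncomputable def vmvR (v : Fin k → K) : (Fin k → K) →ₗ[K] Matrix (Fin k) (Fin k) K where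
  toFun x := Matrix.vecMulVec v x
  map_add' x y := by
    ext a b
    simp [Matrix.vecMulVec_apply, mul_add]
  map_smul' c x := by
    ext a b
    simp [Matrix.vecMulVec_apply]
    ring

/-- `vecMulVec` as a linear map in the first argument. -/
noncomputable def vmvL (x : Fin k → K) : (Fin k → K) →ₗ[K] Matrix (Fin k) (Fin k) K where
  toFun v := Matrix.vecMulVec v x
  map_add' v w := by
    ext a b
    simp [Matrix.vecMulVec_apply, add_mul]
  map_smul' c v := by
    ext a b
    simp [Matrix.vecMulVec_apply]
    ring

lemma vmvR_apply (v x : Fin k → K) : vmvR v x = Matrix.vecMulVec v x := rfl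

lemma vmvL_apply (v x : Fin k → K) : vmvL x v = Matrix.vecMulVec v x := rfl

/-- dot product as a linear map in the second argument. -/
noncomputable def dotL (v : Fin k → K) : (Fin k → K) →ₗ[K] K where
  toFun y := dotProduct v y
  map_add' x y := by
    simp [dotProduct, mul_add, Finset.sum_add_distrib]
  map_smul' c x := by
    simp only [dotProduct, Pi.smul_apply, smul_eq_mul, RingHom.id_apply, Finset.mul_sum]
    exact Finset.sum_congr rfl (fun i _ => by ring)

lemma dotL_apply (v y : Fin k → K) : dotL v y = dotProduct v y := rfl

lemma piece_le_sum {ι V' : Type*} [AddCommGroup V'] [Module K V']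
    (S : ι → Submodule K V') (A : Finset ι) {j : ι} (hj : j ∈ A) :
    S j ≤ ∑ i ∈ A, S i := by
  classical
  rw [← Finset.insert_erase hj, Finset.sum_insert (Finset.notMem_erase _ _),
    Submodule.add_eq_sup]
  exact le_sup_left

/-- Every matrix is the sum of the rank-one matrices built from its rows. -/
lemma matrix_eq_sum_rows (m : Matrix (Fin k) (Fin k) K) :
    m = ∑ a : Fin k, Matrix.vecMulVec (Pi.single a 1) (m a) := by
  ext a' b'
  rw [Matrix.sum_apply]
  simp only [Matrix.vecMulVec_apply]
  rw [Finset.sum_eq_single a']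
  · simp
  · intro a _ ha
    simp [Pi.single_apply, Ne.symm ha]
  · simp

theorem main_construction (hk : 2 ≤ k)
    (u : Fin n → Fin k → K)
    (hind : ∀ A : Finset (Fin n), A.card = k →
      LinearIndependent K (fun j : A => u (j : Fin n)))
    (hux : ∀ x, u x ≠ 0) :
    ∃ (V : Type) (_ : AddCommGroup V) (_ : Module K V)
      (W : Fin n → Submodule K V), IsERCode k k k (k - 1) (k ^ 2 - 1) W := by
  classical
  have hk0 : 0 < k := by omega
  have hne : Nonempty (Fin k) := ⟨⟨0, hk0⟩⟩
  have hone : (1 : Matrix (Fin k) (Fin k) K) ≠ 0 := by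
    intro h
    have h2 : (1 : Matrix (Fin k) (Fin k) K) ⟨0, hk0⟩ ⟨0, hk0⟩
        = (0 : Matrix (Fin k) (Fin k) K) ⟨0, hk0⟩ ⟨0, hk0⟩ := by rw [h]
    rw [Matrix.one_apply_eq, Matrix.zero_apply] at h2
    exact one_ne_zero h2
  set Z : Submodule K (Matrix (Fin k) (Fin k) K) :=
    Submodule.span K {(1 : Matrix (Fin k) (Fin k) K)} with hZ
  have hfrk : Module.finrank K (Fin k → K) = k := Module.finrank_fin_fun K
  -- the basis associated to a `k`-subset
  have hbasis : ∀ A : Finset (Fin n), A.card = k →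
      ∃ b : Basis A K (Fin k → K), ∀ j : A, b j = u (j : Fin n) := by
    intro A hA
    have hcard : Fintype.card A = Module.finrank K (Fin k → K) := by
      rw [hfrk, Fintype.card_coe, hA]
    have hAne : A.Nonempty := Finset.card_pos.mp (by omega)
    haveI : Nonempty A := hAne.to_subtype
    refine ⟨basisOfLinearIndependentOfCardEqFinrank (hind A hA) hcard, fun j => ?_⟩
    rw [coe_basisOfLinearIndependentOfCardEqFinrank]
  refine ⟨Matrix (Fin k) (Fin k) K ⧸ Z, inferInstance, inferInstance,
    fun i => (LinearMap.range (vmvR (u i))).map Z.mkQ, ?_, ?_, ?_, ?_, ?_⟩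
  · infer_instance
  · -- finrank of the quotient
    have h1 : Module.finrank K Z = 1 := finrank_span_singleton hone
    have h2 := Submodule.finrank_quotient_add_finrank Z
    have h3 : Module.finrank K (Matrix (Fin k) (Fin k) K) = k * k := by
      rw [Module.finrank_matrix]
      simp
    rw [h1, h3] at h2
    have : k ^ 2 = k * k := sq k
    omega
  · -- each node has dimension at most k
    intro i
    dsimp only
    have : (LinearMap.range (vmvR (u i))).map Z.mkQ
        = LinearMap.range (Z.mkQ ∘ₗ vmvR (u i)) := by
      rw [LinearMap.range_comp]
    show Module.finrank K ((LinearMap.range (vmvR (u i))).map Z.mkQ) ≤ k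
    rw [this]
    calc Module.finrank K (LinearMap.range (Z.mkQ ∘ₗ vmvR (u i)))
        ≤ Module.finrank K (Fin k → K) := LinearMap.finrank_range_le _
      _ = k := hfrk
  · -- data recovery
    intro A hA
    obtain ⟨b, hb⟩ := hbasis A hA
    rw [eq_top_iff]
    rintro v -
    obtain ⟨m, rfl⟩ := Z.mkQ_surjective v
    rw [matrix_eq_sum_rows m, map_sum]
    refine Submodule.sum_mem _ (fun a _ => ?_)
    obtain ⟨r, hr⟩ : ∃ r : A → K, Pi.single a (1 : K) = ∑ j : A, r j • u (j : Fin n) := by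
      refine ⟨fun j => b.repr (Pi.single a 1) j, ?_⟩
      conv_lhs => rw [← b.sum_repr (Pi.single a 1)]
      exact Finset.sum_congr rfl (fun j _ => by rw [hb j])
    have : Matrix.vecMulVec (Pi.single a (1 : K)) (m a) =
        ∑ j : A, r j • Matrix.vecMulVec (u (j : Fin n)) (m a) := by
      rw [← vmvL_apply, hr, map_sum]
      exact Finset.sum_congr rfl (fun j _ => by rw [map_smul, vmvL_apply])
    rw [this, map_sum]
    refine Submodule.sum_mem _ (fun j _ => ?_)
    rw [map_smul]
    refine Submodule.smul_mem _ _ ?_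
    refine piece_le_sum (fun i => (LinearMap.range (vmvR (u i))).map Z.mkQ) A j.2 ?_
    exact Submodule.mem_map_of_mem ⟨m a, rfl⟩
  · -- node repair
    intro x A hxA hA
    obtain ⟨b, hb⟩ := hbasis A hA
    -- coordinates of `u x` in the basis
    set c : A → K := fun j => b.repr (u x) j with hc
    -- "dual basis" vectors
    set w : A → (Fin k → K) := fun j a => b.repr (Pi.single a 1) j with hw
    -- the functional ψ
    set ψ : (Fin k → K) →ₗ[K] K := ∑ j : A, c j • dotL (u (j : Fin n)) with hψ
    have hψ_apply : ∀ y, ψ y = ∑ j : A, c j * dotProduct (u (j : Fin n)) y := by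
      intro y
      rw [hψ]
      simp [dotL_apply]
    -- ψ (w j) = c j
    have hdot : ∀ (j j' : A), dotProduct (u (j : Fin n)) (w j')
        = if j = j' then 1 else 0 := by
      intro j j'
      have h1 : dotProduct (u (j : Fin n)) (w j')
          = ∑ a : Fin k, b.coord j' (u (j : Fin n) a • (Pi.single a (1 : K) : Fin k → K)) := by
        refine Finset.sum_congr rfl (fun a _ => ?_)
        rw [map_smul, smul_eq_mul, Basis.coord_apply]
      rw [h1, ← map_sum]
      have hsum : (∑ a : Fin k, u (j : Fin n) a • (Pi.single a (1 : K) : Fin k → K))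
          = u (j : Fin n) := by
        ext a'
        simp [Pi.single_apply]
      rw [hsum, ← hb j, Basis.coord_apply, b.repr_self]
      simp [Finsupp.single_apply]
  
    have hψw : ∀ j : A, ψ (w j) = c j := by
      intro j
      rw [hψ_apply]
      rw [Finset.sum_eq_single j]
      · rw [hdot]; simp
      · intro j' _ hj'
        rw [hdot]; simp [hj']
      · simp
    -- ψ ≠ 0
    have hψ_ne : ∃ y, ψ y ≠ 0 := by
      by_contra h
      push_neg at h
      have hc0 : ∀ j : A, c j = 0 := fun j => by rw [← hψw j]; exact h _
      have : b.repr (u x) = 0 := by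
        ext j
        exact hc0 j
      exact hux x (by simpa using b.repr.map_eq_zero_iff.mp this)
    -- finrank of the kernel of ψ
    have hker : Module.finrank K (LinearMap.ker ψ) ≤ k - 1 := by
      have h2 := LinearMap.finrank_range_add_finrank_ker ψ
      rw [hfrk] at h2
      have hrange : LinearMap.range ψ ≠ ⊥ := by
        obtain ⟨y, hy⟩ := hψ_ne
        intro h
        rw [LinearMap.range_eq_bot] at h
        rw [h] at hy
        simp at hy
      have : 0 < Module.finrank K (LinearMap.range ψ) := by
        rcases Nat.eq_zero_or_pos (Module.finrank K (LinearMap.range ψ)) with h | h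
        · exact absurd (Submodule.finrank_eq_zero.mp h) hrange
        · exact h
      omega
    -- the repair subspaces
    refine ⟨fun j => ((LinearMap.ker ψ).map (vmvR (u j))).map Z.mkQ, fun j hj => ⟨?_, ?_⟩, ?_⟩
    · exact Submodule.map_mono (LinearMap.map_le_range)
    · calc Module.finrank K (((LinearMap.ker ψ).map (vmvR (u j))).map Z.mkQ)
          ≤ Module.finrank K ((LinearMap.ker ψ).map (vmvR (u j))) :=
            Submodule.finrank_map_le _ _
        _ ≤ Module.finrank K (LinearMap.ker ψ) := Submodule.finrank_map_le _ _
        _ ≤ k - 1 := hker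
    · -- W x is contained in the sum of the repair subspaces
      rintro v ⟨m, ⟨y, rfl⟩, rfl⟩
      -- the repair vectors
      set yy : A → (Fin k → K) := fun j => c j • y - ψ y • w j with hyy
      have hyyker : ∀ j : A, yy j ∈ LinearMap.ker ψ := by
        intro j
        rw [LinearMap.mem_ker, hyy]
        simp only [map_sub, map_smul, hψw j, smul_eq_mul]
        ring
      -- the key algebraic identity
      have hkey : Matrix.vecMulVec (u x) y
          - ∑ j : A, Matrix.vecMulVec (u (j : Fin n)) (yy j)
          = ψ y • (1 : Matrix (Fin k) (Fin k) K) := by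
        have e1 : ∑ j : A, c j • Matrix.vecMulVec (u (j : Fin n)) y
            = Matrix.vecMulVec (u x) y := by
          have : ∑ j : A, c j • Matrix.vecMulVec (u (j : Fin n)) y
              = vmvL y (∑ j : A, c j • u (j : Fin n)) := by
            rw [map_sum]
            refine Finset.sum_congr rfl (fun j _ => ?_)
            rw [map_smul, vmvL_apply]
          rw [this]
          have hux' : (∑ j : A, c j • u (j : Fin n)) = u x := by
            conv_rhs => rw [← b.sum_repr (u x)]
            exact Finset.sum_congr rfl (fun j _ => by rw [hb j, hc])
          rw [hux', vmvL_apply]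
        have e2 : ∑ j : A, Matrix.vecMulVec (u (j : Fin n)) (w j)
            = (1 : Matrix (Fin k) (Fin k) K) := by
          ext a b'
          rw [Matrix.sum_apply]
          simp only [Matrix.vecMulVec_apply]
          have : ∑ j : A, u (j : Fin n) a * w j b'
              = (∑ j : A, b.repr (Pi.single b' 1) j • u (j : Fin n)) a := by
            rw [Finset.sum_apply]
            exact Finset.sum_congr rfl (fun j _ => by
              simp [hw, mul_comm])
          rw [this]
          have : (∑ j : A, b.repr (Pi.single b' 1) j • u (j : Fin n))
              = Pi.single b' (1 : K) := by
            conv_rhs => rw [← b.sum_repr (Pi.single b' 1)]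
            exact Finset.sum_congr rfl (fun j _ => by rw [hb j])
          rw [this]
          simp [Pi.single_apply, Matrix.one_apply, eq_comm]
        have expand : ∀ j : A, Matrix.vecMulVec (u (j : Fin n)) (yy j)
            = c j • Matrix.vecMulVec (u (j : Fin n)) y
              - ψ y • Matrix.vecMulVec (u (j : Fin n)) (w j) := by
          intro j
          calc Matrix.vecMulVec (u (j : Fin n)) (yy j)
              = vmvR (u (j : Fin n)) (c j • y - ψ y • w j) := rfl
            _ = _ := by rw [map_sub, map_smul, map_smul, vmvR_apply, vmvR_apply]
        rw [Finset.sum_congr rfl (fun j _ => expand j), Finset.sum_sub_distrib,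
          ← Finset.smul_sum, e1, e2]
        abel
      -- conclude
      have hm : Z.mkQ (Matrix.vecMulVec (u x) y)
          = Z.mkQ (∑ j : A, Matrix.vecMulVec (u (j : Fin n)) (yy j)) := by
        rw [Submodule.mkQ_apply, Submodule.mkQ_apply, Submodule.Quotient.eq]
        rw [hkey]
        exact Submodule.smul_mem _ _ (Submodule.mem_span_singleton_self _)
      rw [vmvR_apply, hm, map_sum]
      refine Submodule.sum_mem _ (fun j _ => ?_)
      refine piece_le_sum
        (fun i => ((LinearMap.ker ψ).map (vmvR (u i))).map Z.mkQ) A j.2 ?_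
      exact Submodule.mem_map_of_mem (Submodule.mem_map_of_mem (hyyker j))

end Aux

/-- For all integers `k ≥ 2` and `n > k`, there exist a prime power `q`
and an `(n, k, k)` linear exact-repair regeneration code over `𝔽_q` with parameters
`(α, β, F) = (k, k - 1, k ^ 2 - 1)`. -/
theorem stmt0 (k n : ℕ) (hk : 2 ≤ k) (hn : k < n) :
    ∃ q : ℕ, IsPrimePow q ∧
      ∃ (K : Type) (_ : Field K) (_ : Fintype K), Fintype.card K = q ∧
        ∃ (V : Type) (_ : AddCommGroup V) (_ : Module K V)
          (W : Fin n → Submodule K V),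
          IsERCode k k k (k - 1) (k ^ 2 - 1) W := by
  classical
  obtain ⟨q, hqn, hq⟩ := Nat.exists_infinite_primes n
  haveI : Fact q.Prime := ⟨hq⟩
  refine ⟨q, hq.isPrimePow, ZMod q, inferInstance, inferInstance, ZMod.card q, ?_⟩
  -- the evaluation points
  set t : Fin n → ZMod q := fun i => ((i : ℕ) : ZMod q) with ht
  have htinj : Function.Injective t := by
    intro i j hij
    have hi : ((i : ℕ) : ZMod q).val = (i : ℕ) := ZMod.val_natCast_of_lt (lt_of_lt_of_le i.2 hqn)
    have hj : ((j : ℕ) : ZMod q).val = (j : ℕ) := ZMod.val_natCast_of_lt (lt_of_lt_of_le j.2 hqn)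
    have : (i : ℕ) = (j : ℕ) := by rw [← hi, ← hj]; exact congrArg ZMod.val hij
    exact Fin.ext this
  set u : Fin n → Fin k → ZMod q := fun i a => t i ^ (a : ℕ) with hu
  refine main_construction hk u ?_ ?_
  · intro A hA
    have hcard : Fintype.card A = k := by rw [Fintype.card_coe, hA]
    set e : Fin k ≃ A := (Fintype.equivFinOfCardEq hcard).symm with he
    set Mv : Matrix (Fin k) (Fin k) (ZMod q) := Matrix.vandermonde (fun i => t ((e i : Fin n))) with hMv
    have hdet : Mv.det ≠ 0 := by
      rw [hMv, Matrix.det_vandermonde_ne_zero_iff]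
      intro i j hij
      exact e.injective (Subtype.ext (htinj hij))
    have hunit : IsUnit Mv := by
      rw [Matrix.isUnit_iff_isUnit_det]
      exact isUnit_iff_ne_zero.mpr hdet
    have hli : LinearIndependent (ZMod q) (fun i : Fin k => Mv i) :=
      Matrix.linearIndependent_rows_iff_isUnit.mpr hunit
    have hMvrow : ∀ i : Fin k, Mv i = u ((e i : Fin n)) := by
      intro i
      funext a
      rw [hMv, hu]
      rfl
    have hli2 : LinearIndependent (ZMod q) (fun i : Fin k => u ((e i : Fin n))) := by
      have : (fun i : Fin k => u ((e i : Fin n))) = fun i => Mv i := by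
        funext i; rw [hMvrow]
      rw [this]; exact hli
    have := hli2.comp e.symm e.symm.injective
    have heq : (fun j : A => u ((e (e.symm j) : Fin n))) = fun j : A => u (j : Fin n) := by
      funext j
      rw [e.apply_symm_apply]
    rw [← heq]
    exact this
  · intro x h
    have : u x ⟨0, by omega⟩ = 0 := by rw [h]; rfl
    rw [hu] at this
    simp at this
end

section
/- In the repair setup below, every repair subspace has full dimension: dim S_j = k−1 for every j ∈ A. -/
set_option maxHeartbeats 1000000 in
/-- in the repair setup, every repair subspace has full dimension
`k - 1`. -/
theorem stmt4 {K : Type} [Field K] {V : Type} [AddCommGroup V] [Module K V]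
    (n k : ℕ) (hk : 2 ≤ k) (hn : k + 1 ≤ n)
    (W : Fin n → Submodule K V)
    (hW : IsERCode k k k (k - 1) (k ^ 2 - 1) W)
    (x : Fin n) (A : Finset (Fin n)) (hx : x ∉ A) (hA : A.card = k)
    (S : Fin n → Submodule K V)
    (hSW : ∀ j ∈ A, S j ≤ W j)
    (hSdim : ∀ j ∈ A, Module.finrank K (S j) ≤ k - 1)
    (hrep : W x ≤ ∑ j ∈ A, S j)
    :
    ∀ j ∈ A, Module.finrank K (S j) = k - 1 := by
  obtain ⟨hfin, hF, hWdim, hdata, -⟩ := hW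
  haveI : FiniteDimensional K V := hfin
  intro j hj
  -- the finrank of a finite sum of submodules is at most the sum of the finranks
  have sumle : ∀ (B : Finset (Fin n)) (T : Fin n → Submodule K V),
      Module.finrank K (∑ i ∈ B, T i : Submodule K V) ≤
        ∑ i ∈ B, Module.finrank K (T i) := by
    intro B T
    classical
    induction B using Finset.induction_on with
    | empty => simp only [Finset.sum_empty]; exact (finrank_bot K V).le
    | insert _ _ hb ih =>
      rename_i a B'
      rw [Finset.sum_insert hb, Finset.sum_insert hb, Submodule.add_eq_sup]
      exact le_trans (Submodule.finrank_add_le_finrank_add_finrank _ _)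
        (Nat.add_le_add_left ih _)
  have hxe : x ∉ A.erase j := fun h => hx (Finset.mem_of_mem_erase h)
  have hcard : (insert x (A.erase j)).card = k := by
    rw [Finset.card_insert_of_notMem hxe, Finset.card_erase_of_mem hj, hA]
    omega
  have htop := hdata _ hcard
  -- the repaired node is contained in `S j` plus the other nodes of `A`
  have hWxle : W x ≤ S j ⊔ ∑ i ∈ A.erase j, W i := by
    refine le_trans hrep ?_
    have h2 : (∑ i ∈ A.erase j, S i : Submodule K V) ≤ ∑ i ∈ A.erase j, W i :=
      Finset.sum_le_sum fun i hi => hSW i (Finset.mem_of_mem_erase hi)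
    rw [← Finset.add_sum_erase A S hj, Submodule.add_eq_sup]
    exact sup_le_sup le_rfl h2
  -- hence `S j` plus the other nodes of `A` spans everything
  have hle : (⊤ : Submodule K V) ≤ S j ⊔ ∑ i ∈ A.erase j, W i := by
    rw [← htop, Finset.sum_insert hxe, Submodule.add_eq_sup]
    exact sup_le hWxle le_sup_right
  have h1 : Module.finrank K V ≤ Module.finrank K (S j) +
      ∑ i ∈ A.erase j, Module.finrank K (W i) := by
    have e1 : Module.finrank K (S j ⊔ ∑ i ∈ A.erase j, W i : Submodule K V) =
        Module.finrank K V := by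
      rw [top_le_iff.mp hle, finrank_top]
    have e2 : Module.finrank K (S j ⊔ ∑ i ∈ A.erase j, W i : Submodule K V) ≤
        Module.finrank K (S j) +
          Module.finrank K (∑ i ∈ A.erase j, W i : Submodule K V) :=
      Submodule.finrank_add_le_finrank_add_finrank _ _
    have e3 := sumle (A.erase j) W
    omega
  have h2 : ∑ i ∈ A.erase j, Module.finrank K (W i) ≤ (k - 1) * k := by
    calc ∑ i ∈ A.erase j, Module.finrank K (W i)
        ≤ ∑ _i ∈ A.erase j, k := Finset.sum_le_sum fun i _ => hWdim i
      _ = (k - 1) * k := by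
          rw [Finset.sum_const, Finset.card_erase_of_mem hj, hA, smul_eq_mul]
  have hs := hSdim j hj
  have hsq : k ^ 2 = k * k := sq k
  have hmul : (k - 1) * k = k * k - k := by
    rw [Nat.sub_mul, one_mul]
  have hkk : k ≤ k * k := Nat.le_mul_of_pos_left k (by omega)
  rw [hF] at h1
  omega
end

section
/- In the repair setup below, there exist nonzero vectors t_j ∈ W_j for j ∈ A such that ∑_{j∈A} t_j = 0 and W_j = S_j ⊕ span(t_j) (an internal direct sum) for every j ∈ A. -/
open Module Submodule

/-- Decompose a member of a finite sum of submodules. -/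
lemma mem_finsetSum_decomp {K V ι : Type} [Field K] [AddCommGroup V] [Module K V]
    (s : Finset ι) (p : ι → Submodule K V) (v : V) (hv : v ∈ ∑ i ∈ s, p i) :
    ∃ g : ι → V, (∀ i ∈ s, g i ∈ p i) ∧ ∑ i ∈ s, g i = v := by
  classical
  induction s using Finset.induction_on generalizing v with
  | empty =>
    rw [Finset.sum_empty] at hv
    have : v = 0 := by simpa using hv
    exact ⟨0, by simp, by simp [this]⟩
  | insert _ _ hnot ih =>
    rename_i a s'
    rw [Finset.sum_insert hnot] at hv
    rw [Submodule.add_eq_sup, Submodule.mem_sup] at hv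
    obtain ⟨y, hy, z, hz, rfl⟩ := hv
    obtain ⟨g, hg, hgsum⟩ := ih z hz
    refine ⟨Function.update g a y, ?_, ?_⟩
    · intro i hi
      rcases eq_or_ne i a with rfl | hne
      · simp [Function.update_self, hy]
      · rw [Function.update_of_ne hne]
        exact hg i (by simpa [hne] using hi)
    · rw [Finset.sum_insert hnot, Function.update_self]
      congr 1
      rw [← hgsum]
      exact Finset.sum_congr rfl fun i hi => by
        rw [Function.update_of_ne (by rintro rfl; exact hnot hi)]

/-- The summation linear map out of a product of submodules. -/
noncomputable def sumPi {K V ι : Type} [Field K] [AddCommGroup V] [Module K V] [Fintype ι]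
    (T : ι → Submodule K V) : (∀ i, T i) →ₗ[K] V where
  toFun u := ∑ i, (u i : V)
  map_add' u v := by simp [Finset.sum_add_distrib]
  map_smul' c u := by simp [Finset.smul_sum]

/-- Surjectivity of the summation map forces the total finrank to be large. -/
lemma key_ge {K V ι : Type} [Field K] [AddCommGroup V] [Module K V]
    [FiniteDimensional K V] [Fintype ι] (T : ι → Submodule K V)
    (hsur : ∀ v : V, ∃ u : ∀ i, T i, ∑ i, (u i : V) = v) :
    finrank K V ≤ ∑ i, finrank K (T i) := by
  have hrange : LinearMap.range (sumPi T) = ⊤ :=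
    LinearMap.range_eq_top.mpr fun v => hsur v
  have hdom : finrank K (∀ i, T i) = ∑ i, finrank K (T i) := Module.finrank_pi_fintype K
  have h2 : finrank K (LinearMap.range (sumPi T)) ≤ finrank K (∀ i, T i) :=
    LinearMap.finrank_range_le _
  rw [hrange, finrank_top, hdom] at h2
  exact h2

/-- If a family of submodules covers `V` and total finrank is at most `finrank V`,
then a vanishing sum of members has all members zero. -/
lemma key_inj {K V ι : Type} [Field K] [AddCommGroup V] [Module K V]
    [FiniteDimensional K V] [Fintype ι] (T : ι → Submodule K V)
    (hsur : ∀ v : V, ∃ u : ∀ i, T i, ∑ i, (u i : V) = v)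
    (hdim : ∑ i, finrank K (T i) ≤ finrank K V) :
    ∀ u : ∀ i, T i, ∑ i, (u i : V) = 0 → u = 0 := by
  classical
  have hrange : LinearMap.range (sumPi T) = ⊤ :=
    LinearMap.range_eq_top.mpr fun v => hsur v
  have hdom : finrank K (∀ i, T i) = ∑ i, finrank K (T i) := Module.finrank_pi_fintype K
  have h1 : finrank K (LinearMap.range (sumPi T)) + finrank K (LinearMap.ker (sumPi T)) =
      finrank K (∀ i, T i) := LinearMap.finrank_range_add_finrank_ker _
  rw [hrange, finrank_top, hdom] at h1
  have hge := key_ge T hsur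
  have hker0 : finrank K (LinearMap.ker (sumPi T)) = 0 := by omega
  have hkerbot : LinearMap.ker (sumPi T) = ⊥ := Submodule.finrank_eq_zero.mp hker0
  intro u hu
  have : u ∈ LinearMap.ker (sumPi T) := hu
  rw [hkerbot, Submodule.mem_bot] at this
  exact this

/-- in the repair setup, there exist nonzero vectors `t j ∈ W j`
(`j ∈ A`) summing to zero with `W j = S j ⊕ span {t j}` (internal direct sum) for
every `j ∈ A`. -/
theorem stmt5 {K : Type} [Field K] {V : Type} [AddCommGroup V] [Module K V]
    (n k : ℕ) (hk : 2 ≤ k) (hn : k + 1 ≤ n)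
    (W : Fin n → Submodule K V)
    (hW : IsERCode k k k (k - 1) (k ^ 2 - 1) W)
    (x : Fin n) (A : Finset (Fin n)) (hx : x ∉ A) (hA : A.card = k)
    (S : Fin n → Submodule K V)
    (hSW : ∀ j ∈ A, S j ≤ W j)
    (hSdim : ∀ j ∈ A, Module.finrank K (S j) ≤ k - 1)
    (hrep : W x ≤ ∑ j ∈ A, S j)
    :
    ∃ t : Fin n → V,
      (∀ j ∈ A, t j ≠ 0) ∧ (∀ j ∈ A, t j ∈ W j) ∧ (∑ j ∈ A, t j = 0) ∧
      (∀ j ∈ A, Disjoint (S j) (Submodule.span K {t j}) ∧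
        S j ⊔ Submodule.span K {t j} = W j) := by
  classical
  obtain ⟨hfd, hF, hα, hrec, -⟩ := hW
  have hkk : 2 * k ≤ k * k := Nat.mul_le_mul_right k hk
  have hk2 : k ^ 2 = k * k := sq k
  -- the modified families
  set U : Fin n → Fin n → Submodule K V := fun j i => if i = j then S i else W i with hUdef
  have hAerase : ∀ j ∈ A, (A.erase j).card = k - 1 := fun j hj => by
    rw [Finset.card_erase_of_mem hj, hA]
  have hUjj : ∀ j, U j j = S j := fun j => by simp [hUdef]
  have hUne : ∀ {j i : Fin n}, i ≠ j → U j i = W i := fun h => by simp [hUdef, h]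
  -- each modified family spans V
  have htop : ∀ j ∈ A, ∑ i ∈ A, U j i = ⊤ := by
    intro j hj
    have hxe : x ∉ A.erase j := fun h => hx (Finset.mem_of_mem_erase h)
    have hcard : (insert x (A.erase j)).card = k := by
      rw [Finset.card_insert_of_notMem hxe, hAerase j hj]; omega
    have h1 := hrec _ hcard
    rw [Finset.sum_insert hxe] at h1
    refine le_antisymm le_top ?_
    rw [← h1, Submodule.add_eq_sup]
    refine sup_le ?_ ?_
    · refine le_trans hrep (Finset.sum_le_sum fun i hi => ?_)
      by_cases hij : i = j
      · subst hij; simp [hUdef]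
      · simpa [hUdef, hij] using hSW i hi
    · have : ∑ i ∈ A.erase j, W i = ∑ i ∈ A.erase j, U j i :=
        Finset.sum_congr rfl fun i hi => by
          simp [hUdef, Finset.ne_of_mem_erase hi]
      rw [this]
      exact Finset.sum_le_sum_of_subset_of_nonneg (Finset.erase_subset j A)
        fun i _ _ => bot_le
  -- upper bound on dimensions of modified families
  have hDle : ∀ j ∈ A, ∑ i ∈ A, finrank K (U j i) ≤ k ^ 2 - 1 := by
    intro j hj
    rw [← Finset.add_sum_erase _ _ hj]
    have h1 : finrank K (U j j) ≤ k - 1 := by rw [hUjj]; exact hSdim j hj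
    have h2 : ∑ i ∈ A.erase j, finrank K (U j i) ≤ (k - 1) * k := by
      have := Finset.sum_le_card_nsmul (A.erase j) (fun i => finrank K (U j i)) k
        (fun i hi => by show finrank K ↥(U j i) ≤ k; rw [hUne (Finset.ne_of_mem_erase hi)]; exact hα i)
      rwa [hAerase j hj, smul_eq_mul] at this
    have h3 : (k - 1) * k = k * k - k := by rw [Nat.sub_mul, one_mul]
    rw [hk2]
    omega
  -- surjectivity of modified summation maps
  have hsurj : ∀ j ∈ A, ∀ v : V, ∃ u : ∀ i : ↥A, (U j ↑i), ∑ i, ((u i : V)) = v := by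
    intro j hj v
    have hv : v ∈ ∑ i ∈ A, U j i := by rw [htop j hj]; trivial
    obtain ⟨g, hg, hgsum⟩ := mem_finsetSum_decomp A (U j) v hv
    refine ⟨fun i => ⟨g ↑i, hg ↑i i.2⟩, ?_⟩
    rw [Finset.sum_coe_sort A (fun i => g i)]
    exact hgsum
  -- lower bound on dimensions
  have hDge : ∀ j ∈ A, k ^ 2 - 1 ≤ ∑ i ∈ A, finrank K (U j i) := by
    intro j hj
    have := key_ge (fun i : ↥A => U j ↑i) (hsurj j hj)
    rw [hF, Finset.sum_coe_sort A (fun i => finrank K (U j i))] at this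
    exact this
  -- lower bound on finrank of S j
  have hSge : ∀ j ∈ A, k - 1 ≤ finrank K (S j) := by
    intro j hj
    have h0 := hDge j hj
    rw [← Finset.add_sum_erase _ _ hj] at h0
    have h1 : finrank K (U j j) = finrank K (S j) := by rw [hUjj]
    have h2 : ∑ i ∈ A.erase j, finrank K (U j i) ≤ (k - 1) * k := by
      have := Finset.sum_le_card_nsmul (A.erase j) (fun i => finrank K (U j i)) k
        (fun i hi => by show finrank K ↥(U j i) ≤ k; rw [hUne (Finset.ne_of_mem_erase hi)]; exact hα i)
      rwa [hAerase j hj, smul_eq_mul] at this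
    have h3 : (k - 1) * k = k * k - k := by rw [Nat.sub_mul, one_mul]
    rw [h1] at h0
    rw [h3] at h2
    rw [hk2] at h0
    omega
  -- exact dimension of W i for i ∈ A
  have hWeq : ∀ i ∈ A, finrank K (W i) = k := by
    intro i hi
    have hcard1 : 1 < A.card := by omega
    obtain ⟨j, hj, hji⟩ := Finset.exists_mem_ne hcard1 i
    have h0 := hDge j hj
    rw [← Finset.add_sum_erase _ _ hj] at h0
    have h1 : finrank K (U j j) ≤ k - 1 := by rw [hUjj]; exact hSdim j hj
    have hie : i ∈ A.erase j := Finset.mem_erase.mpr ⟨fun h => hji (h ▸ rfl), hi⟩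
    rw [← Finset.add_sum_erase _ _ hie] at h0
    have h2 : finrank K (U j i) = finrank K (W i) := by rw [hUne (Ne.symm hji)]
    have h3 : ∑ l ∈ (A.erase j).erase i, finrank K (U j l) ≤ (k - 2) * k := by
      have := Finset.sum_le_card_nsmul ((A.erase j).erase i) (fun l => finrank K (U j l)) k
        (fun l hl => by
          have hlj : l ≠ j := Finset.ne_of_mem_erase (Finset.mem_of_mem_erase hl)
          show finrank K ↥(U j l) ≤ k
          rw [hUne hlj]; exact hα l)
      have hc : ((A.erase j).erase i).card = k - 2 := by
        rw [Finset.card_erase_of_mem hie, hAerase j hj]; omega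
      rwa [hc, smul_eq_mul] at this
    have h4 : (k - 2) * k = k * k - 2 * k := by rw [Nat.sub_mul]
    have h5 : finrank K (W i) ≤ k := hα i
    rw [h2] at h0
    rw [h4] at h3
    rw [hk2] at h0
    omega
  -- the master summation map has nontrivial kernel
  have hdomrank : finrank K (∀ i : ↥A, (W ↑i : Submodule K V)) = k * k := by
    rw [Module.finrank_pi_fintype K, Finset.sum_coe_sort A (fun i => finrank K (W i))]
    rw [Finset.sum_congr rfl (fun i hi => hWeq i hi), Finset.sum_const, hA, smul_eq_mul]
  have hkerne : LinearMap.ker (sumPi (fun i : ↥A => (W ↑i : Submodule K V))) ≠ ⊥ := by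
    intro hbot
    have h1 : finrank K (LinearMap.range (sumPi (fun i : ↥A => (W ↑i : Submodule K V)))) +
        finrank K (LinearMap.ker (sumPi (fun i : ↥A => (W ↑i : Submodule K V)))) =
        finrank K (∀ i : ↥A, (W ↑i : Submodule K V)) :=
      LinearMap.finrank_range_add_finrank_ker _
    have h2 : finrank K (LinearMap.range (sumPi (fun i : ↥A => (W ↑i : Submodule K V)))) ≤
        finrank K V := Submodule.finrank_le _
    rw [hbot, finrank_bot, hdomrank, hF, hk2] at *
    omega
  obtain ⟨u, hu, hu0⟩ := Submodule.exists_mem_ne_zero_of_ne_bot hkerne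
  have husum : ∑ i : ↥A, ((u i : V)) = 0 := hu
  -- define t
  set t : Fin n → V := fun i => if h : i ∈ A then (u ⟨i, h⟩ : V) else 0 with htdef
  have hteq : ∀ i : ↥A, t ↑i = (u i : V) := by
    intro i
    simp only [htdef, dif_pos i.2]
  have hsum0 : ∑ i ∈ A, t i = 0 := by
    rw [← Finset.sum_coe_sort A t]
    rw [Finset.sum_congr rfl fun i _ => hteq i]
    exact husum
  have hmem : ∀ j ∈ A, t j ∈ W j := by
    intro j hj
    rw [show t j = (u ⟨j, hj⟩ : V) from hteq ⟨j, hj⟩]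
    exact (u ⟨j, hj⟩).2
  -- t j ∉ S j
  have hnotS : ∀ j ∈ A, t j ∉ S j := by
    intro j hj hjS
    have hinj := key_inj (fun i : ↥A => U j ↑i) (hsurj j hj)
      (by rw [hF, Finset.sum_coe_sort A (fun i => finrank K (U j i))]; exact hDle j hj)
    have hmemU : ∀ i : ↥A, t ↑i ∈ U j ↑i := by
      intro i
      by_cases hij : (i : Fin n) = j
      · rw [hij, hUjj]; exact hjS
      · rw [hUne hij]; exact hmem ↑i i.2
    have hz := hinj (fun i => ⟨t ↑i, hmemU i⟩)
      (by rw [Finset.sum_coe_sort A t]; exact hsum0)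
    have h0 : ∀ i : ↥A, t ↑i = 0 := fun i =>
      congrArg Subtype.val (congrFun hz i)
    apply hu0
    funext i
    exact Subtype.ext (by rw [← hteq i]; exact h0 i)
  refine ⟨t, ?_, hmem, hsum0, ?_⟩
  · intro j hj h0
    exact hnotS j hj (h0 ▸ (S j).zero_mem)
  · intro j hj
    have htne : t j ≠ 0 := fun h0 => hnotS j hj (h0 ▸ (S j).zero_mem)
    have hdisj : Disjoint (S j) (Submodule.span K {t j}) :=
      (Submodule.disjoint_span_singleton' htne).mpr (hnotS j hj)
    refine ⟨hdisj, ?_⟩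
    have hle : S j ⊔ Submodule.span K {t j} ≤ W j :=
      sup_le (hSW j hj) ((Submodule.span_singleton_le_iff_mem _ _).mpr (hmem j hj))
    refine Submodule.eq_of_le_of_finrank_le hle ?_
    have h1 : finrank K ↥(S j ⊔ Submodule.span K {t j}) +
        finrank K ↥(S j ⊓ Submodule.span K {t j}) =
        finrank K (S j) + finrank K ↥(Submodule.span K {t j}) :=
      Submodule.finrank_sup_add_finrank_inf_eq _ _
    rw [hdisj.eq_bot, finrank_bot, finrank_span_singleton htne] at h1
    have h2 := hSge j hj
    have h3 := hα j
    omega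
end

section
/- In the repair setup below, let t_j ∈ W_j (j ∈ A) be any nonzero vectors satisfying ∑_{j∈A} t_j = 0 and W_j = S_j ⊕ span(t_j) for every j ∈ A, and set T := span{t_j : j ∈ A}. Then dim T = k−1, and moreover T = span{t_j : j ∈ B} for every subset B ⊆ A with |B| = k−1 (equivalently, every k−1 of the vectors t_j, j ∈ A, are linearly independent). -/
lemma finrank_sum_le' {K : Type} [Field K] {V : Type} [AddCommGroup V] [Module K V]
    [FiniteDimensional K V] {ι : Type} (s : Finset ι) (W : ι → Submodule K V) :
    Module.finrank K ↥(∑ j ∈ s, W j) ≤ ∑ j ∈ s, Module.finrank K (W j) := by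
  classical
  induction s using Finset.cons_induction with
  | empty => simp; exact finrank_bot K V
  | cons a s ha ih =>
    rw [Finset.sum_cons, Finset.sum_cons, Submodule.add_eq_sup]
    exact le_trans (Submodule.finrank_add_le_finrank_add_finrank _ _)
      (Nat.add_le_add_left ih _)

/-- in the repair setup, given nonzero `t j ∈ W j` with
`∑ j ∈ A, t j = 0` and `W j = S j ⊕ span {t j}`, the space `T = span {t j : j ∈ A}`
has dimension `k - 1`, and `T` is spanned by any `k - 1` of the vectors `t j`,
`j ∈ A`. -/
theorem stmt6 {K : Type} [Field K] {V : Type} [AddCommGroup V] [Module K V]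
    (n k : ℕ) (hk : 2 ≤ k) (hn : k + 1 ≤ n)
    (W : Fin n → Submodule K V)
    (hW : IsERCode k k k (k - 1) (k ^ 2 - 1) W)
    (x : Fin n) (A : Finset (Fin n)) (hx : x ∉ A) (hA : A.card = k)
    (S : Fin n → Submodule K V)
    (hSW : ∀ j ∈ A, S j ≤ W j)
    (hSdim : ∀ j ∈ A, Module.finrank K (S j) ≤ k - 1)
    (hrep : W x ≤ ∑ j ∈ A, S j)
    (t : Fin n → V)
    (ht0 : ∀ j ∈ A, t j ≠ 0) (htW : ∀ j ∈ A, t j ∈ W j)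
    (htsum : ∑ j ∈ A, t j = 0)
    (htds : ∀ j ∈ A, Disjoint (S j) (Submodule.span K {t j}) ∧
      S j ⊔ Submodule.span K {t j} = W j)
    :
    Module.finrank K (Submodule.span K (t '' ↑A)) = k - 1 ∧
    ∀ B ⊆ A, B.card = k - 1 →
      Submodule.span K (t '' ↑B) = Submodule.span K (t '' ↑A) := by
  classical
  obtain ⟨hFD, hF, hWdim, hdata, -⟩ := hW
  haveI := hFD
  have htop : ∑ j ∈ A, W j = ⊤ := hdata A hA
  -- second conjunct
  have key2 : ∀ B ⊆ A, B.card = k - 1 →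
      Submodule.span K (t '' ↑B) = Submodule.span K (t '' ↑A) := by
    intro B hBA hBcard
    refine le_antisymm (Submodule.span_mono (Set.image_mono hBA)) ?_
    rw [Submodule.span_le]
    rintro _ ⟨j, hj, rfl⟩
    rw [Finset.mem_coe] at hj
    by_cases hjB : j ∈ B
    · exact Submodule.subset_span ⟨j, hjB, rfl⟩
    · have hins : insert j B = A := by
        apply Finset.eq_of_subset_of_card_le (Finset.insert_subset hj hBA)
        rw [hA, Finset.card_insert_of_notMem hjB, hBcard]; omega
      have h1 : t j + ∑ i ∈ B, t i = 0 := by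
        rw [← Finset.sum_insert hjB, hins, htsum]
      rw [eq_neg_of_add_eq_zero_left h1]
      exact Submodule.neg_mem _ (Submodule.sum_mem _ fun i hi =>
        Submodule.subset_span ⟨i, hi, rfl⟩)
  refine ⟨?_, key2⟩
  -- first conjunct
  have hAne : A.Nonempty := by rw [← Finset.card_pos, hA]; omega
  obtain ⟨a, ha⟩ := hAne
  set B := A.erase a with hBdef
  have hBA : B ⊆ A := Finset.erase_subset _ _
  have hBcard : B.card = k - 1 := by rw [hBdef, Finset.card_erase_of_mem ha, hA]
  rw [← key2 B hBA hBcard]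
  -- span of any subset of A is inside the sum of the W's
  have hspan_le : ∀ C : Finset (Fin n), C ⊆ A →
      Submodule.span K (t '' ↑C) ≤ ∑ j ∈ C, W j := by
    intro C hCA
    rw [Submodule.span_le]
    rintro _ ⟨j, hj, rfl⟩
    rw [Finset.mem_coe] at hj
    exact Finset.single_le_sum (f := W) (fun i _ => zero_le) hj (htW j (hCA hj))
  -- linear independence of t on B
  have hind : LinearIndependent K (fun j : ↥B => t ↑j) := by
    by_contra hni
    obtain ⟨g, hgsum, j1, hj1⟩ := Fintype.not_linearIndependent_iff.mp hni
    set a1 : Fin n := ↑j1 with ha1def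
    have ha1B : a1 ∈ B := j1.2
    set C := B.erase a1 with hCdef
    -- extend g to Fin n
    set G : Fin n → K := fun j => if h : j ∈ B then g ⟨j, h⟩ else 0 with hGdef
    have hGsum : ∑ j ∈ B, G j • t j = 0 := by
      rw [← hgsum, Finset.univ_eq_attach, ← Finset.sum_attach B (fun j => G j • t j)]
      refine Finset.sum_congr rfl fun j _ => ?_
      simp [hGdef, j.2]
    have hGa1 : G a1 ≠ 0 := by simpa [hGdef, ha1B] using hj1
    -- t a1 ∈ span of t over C
    have hta1 : t a1 ∈ Submodule.span K (t '' ↑C) := by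
      have h1 : G a1 • t a1 + ∑ j ∈ C, G j • t j = 0 := by
        have := Finset.add_sum_erase B (fun j => G j • t j) ha1B
        rw [hGsum] at this
        rw [hCdef]; exact this
      have h2 : t a1 = (G a1)⁻¹ • (-∑ j ∈ C, G j • t j) := by
        rw [← eq_neg_of_add_eq_zero_left h1, smul_smul, inv_mul_cancel₀ hGa1, one_smul]
      rw [h2]
      exact Submodule.smul_mem _ _ (Submodule.neg_mem _ (Submodule.sum_mem _ fun j hj =>
        Submodule.smul_mem _ _ (Submodule.subset_span ⟨j, hj, rfl⟩)))
    have hCA : C ⊆ A := (Finset.erase_subset _ _).trans hBA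
    have ha1A : a1 ∈ A := hBA ha1B
    -- chain of inclusions
    have hta : t a ∈ ∑ j ∈ B, W j := hspan_le B hBA (by
      rw [key2 B hBA hBcard]; exact Submodule.subset_span ⟨a, ha, rfl⟩)
    have hWa : W a ≤ S a ⊔ ∑ j ∈ B, W j := by
      rw [← (htds a ha).2]
      exact sup_le_sup_left ((Submodule.span_singleton_le_iff_mem _ _).mpr hta) _
    have hta1' : t a1 ∈ ∑ j ∈ C, W j := hspan_le C hCA hta1
    have hWa1 : W a1 ≤ S a1 ⊔ ∑ j ∈ C, W j := by
      rw [← (htds a1 ha1A).2]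
      exact sup_le_sup_left ((Submodule.span_singleton_le_iff_mem _ _).mpr hta1') _
    have hsumB : (∑ j ∈ B, W j) ≤ S a1 ⊔ ∑ j ∈ C, W j := by
      have hBsum : W a1 + ∑ j ∈ C, W j = ∑ j ∈ B, W j := Finset.add_sum_erase B W ha1B
      rw [← hBsum, Submodule.add_eq_sup]
      exact sup_le hWa1 le_sup_right
    have htop_le : (⊤ : Submodule K V) ≤ S a ⊔ (S a1 ⊔ ∑ j ∈ C, W j) := by
      rw [← htop]
      have hAsum : W a + ∑ j ∈ B, W j = ∑ j ∈ A, W j := Finset.add_sum_erase A W ha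
      rw [← hAsum, Submodule.add_eq_sup]
      exact sup_le (hWa.trans (sup_le_sup_left hsumB _)) (hsumB.trans le_sup_right)
    -- dimension count
    have hCcard : C.card = k - 2 := by
      rw [hCdef, Finset.card_erase_of_mem ha1B, hBcard]; omega
    have hCsum : ∑ j ∈ C, Module.finrank K (W j) ≤ (k - 2) * k := by
      calc ∑ j ∈ C, Module.finrank K (W j) ≤ C.card • k :=
            Finset.sum_le_card_nsmul C _ k (fun j _ => hWdim j)
        _ = (k - 2) * k := by rw [smul_eq_mul, hCcard]
    have hd : Module.finrank K V ≤ (k - 1) + ((k - 1) + (k - 2) * k) := by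
      calc Module.finrank K V = Module.finrank K (⊤ : Submodule K V) := (finrank_top K V).symm
        _ ≤ Module.finrank K ↥(S a ⊔ (S a1 ⊔ ∑ j ∈ C, W j)) := Submodule.finrank_mono htop_le
        _ ≤ Module.finrank K (S a) + Module.finrank K ↥(S a1 ⊔ ∑ j ∈ C, W j) :=
            Submodule.finrank_add_le_finrank_add_finrank _ _
        _ ≤ Module.finrank K (S a) +
            (Module.finrank K (S a1) + Module.finrank K ↥(∑ j ∈ C, W j)) :=
            Nat.add_le_add_left (Submodule.finrank_add_le_finrank_add_finrank _ _) _
        _ ≤ (k - 1) + ((k - 1) + (k - 2) * k) := by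
            exact add_le_add (hSdim a ha) (add_le_add (hSdim a1 ha1A)
              ((finrank_sum_le' C W).trans hCsum))
    rw [hF, pow_two] at hd
    have hsub : (k - 2) * k = k * k - 2 * k := Nat.sub_mul _ _ _
    have h2k : 2 * k ≤ k * k := Nat.mul_le_mul_right k hk
    rw [hsub] at hd
    generalize hm : k * k = m at hd h2k
    omega
  -- conclude
  have himg : t '' ↑B = Set.range (fun j : ↥B => t ↑j) := by
    ext v; simp [Set.mem_image, Subtype.exists]
  rw [himg, finrank_span_eq_card hind, Fintype.card_coe, hBcard]
end

section
/- In the repair setup below, the repair subspaces {S_j : j ∈ A} are mutually linearly independent: if vectors v_j ∈ S_j (j ∈ A) satisfy ∑_{j∈A} v_j = 0, then v_j = 0 for every j ∈ A. -/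
lemma finrank_finset_sum_le' {K : Type} [Field K] {V : Type} [AddCommGroup V] [Module K V]
    [FiniteDimensional K V] {ι : Type} (s : Finset ι) (W : ι → Submodule K V) :
    Module.finrank K (∑ j ∈ s, W j : Submodule K V) ≤ ∑ j ∈ s, Module.finrank K (W j) := by
  classical
  induction s using Finset.induction_on with
  | empty => simp; exact finrank_bot _ _
  | insert _ _ h ih =>
      rw [Finset.sum_insert h, Finset.sum_insert h]
      calc Module.finrank K (_ ⊔ _ : Submodule K V) ≤ _ :=
            Submodule.finrank_add_le_finrank_add_finrank _ _
        _ ≤ _ := by omega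

/-- in the repair setup, the repair subspaces `{S j : j ∈ A}` are
mutually linearly independent: if `v j ∈ S j` (`j ∈ A`) and `∑ j ∈ A, v j = 0`,
then every `v j = 0`. -/
theorem stmt7 {K : Type} [Field K] {V : Type} [AddCommGroup V] [Module K V]
    (n k : ℕ) (hk : 2 ≤ k) (hn : k + 1 ≤ n)
    (W : Fin n → Submodule K V)
    (hW : IsERCode k k k (k - 1) (k ^ 2 - 1) W)
    (x : Fin n) (A : Finset (Fin n)) (hx : x ∉ A) (hA : A.card = k)
    (S : Fin n → Submodule K V)
    (hSW : ∀ j ∈ A, S j ≤ W j)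
    (hSdim : ∀ j ∈ A, Module.finrank K (S j) ≤ k - 1)
    (hrep : W x ≤ ∑ j ∈ A, S j)
    :
    ∀ v : Fin n → V, (∀ j ∈ A, v j ∈ S j) → (∑ j ∈ A, v j = 0) →
      ∀ j ∈ A, v j = 0 := by
  classical
  obtain ⟨hfd, hF, hα, hrec, -⟩ := hW
  intro v hv hsum j0 hj0
  by_contra hne
  obtain ⟨p, rfl⟩ : ∃ p, k = p + 1 := ⟨k - 1, by omega⟩
  set U : Submodule K V := ∑ j ∈ A.erase j0, W j with hU
  -- v j0 lies in U
  have hsum' : v j0 + ∑ j ∈ A.erase j0, v j = 0 := by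
    rw [Finset.add_sum_erase _ v hj0]; exact hsum
  have hvU : v j0 ∈ U := by
    have h2 : ∑ j ∈ A.erase j0, v j ∈ U :=
      Submodule.sum_mem _ (fun j hj =>
        Finset.single_le_sum (f := W) (fun i _ => zero_le) hj
          (hSW j (Finset.mem_of_mem_erase hj) (hv j (Finset.mem_of_mem_erase hj))))
    have : v j0 = -(∑ j ∈ A.erase j0, v j) := eq_neg_of_add_eq_zero_left hsum'
    rw [this]; exact U.neg_mem h2
  have hvI : v j0 ∈ S j0 ⊓ U := ⟨hv j0 hj0, hvU⟩
  -- the intersection is nontrivial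
  have hc : 1 ≤ Module.finrank K (S j0 ⊓ U : Submodule K V) := by
    have : Nontrivial (S j0 ⊓ U : Submodule K V) :=
      ⟨⟨⟨v j0, hvI⟩, 0, by simpa using hne⟩⟩
    exact Module.finrank_pos_iff.mpr this
  -- data recovery with node x replacing j0
  have hxe : x ∉ A.erase j0 := fun h => hx (Finset.mem_of_mem_erase h)
  have hcard : (insert x (A.erase j0)).card = p + 1 := by
    rw [Finset.card_insert_of_notMem hxe, Finset.card_erase_of_mem hj0, hA]; omega
  have htop : W x ⊔ U = ⊤ := by
    have := hrec (insert x (A.erase j0)) hcard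
    rwa [Finset.sum_insert hxe, Submodule.add_eq_sup] at this
  -- W x is inside S j0 ⊔ U
  have hWx : W x ≤ S j0 ⊔ U := by
    refine hrep.trans ?_
    rw [← Finset.add_sum_erase _ _ hj0, Submodule.add_eq_sup]
    exact sup_le_sup le_rfl (Finset.sum_le_sum (fun j hj =>
      hSW j (Finset.mem_of_mem_erase hj)))
  have htop' : S j0 ⊔ U = ⊤ := top_unique (htop ▸ sup_le hWx le_sup_right)
  -- dimension count
  have heq := Submodule.finrank_sup_add_finrank_inf_eq (S j0) U
  rw [htop', finrank_top] at heq
  have hb : Module.finrank K U ≤ p * p + p := by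
    have h1 : Module.finrank K U ≤ ∑ j ∈ A.erase j0, Module.finrank K (W j) :=
      finrank_finset_sum_le' _ _
    have h2 : ∑ j ∈ A.erase j0, Module.finrank K (W j) ≤ (A.erase j0).card • (p + 1) :=
      Finset.sum_le_card_nsmul _ _ _ (fun j _ => hα j)
    have h3 : (A.erase j0).card = p := by
      rw [Finset.card_erase_of_mem hj0, hA]
      omega
    have h4 : p * (p + 1) = p * p + p := by ring
    rw [h3, smul_eq_mul, h4] at h2
    exact h1.trans h2
  have ha : Module.finrank K (S j0) ≤ p := by simpa using hSdim j0 hj0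
  have hd : Module.finrank K V = p * p + 2 * p := by
    rw [hF]
    have e : (p + 1) ^ 2 = p * p + 2 * p + 1 := by ring
    rw [e]
    simp
  have key : ∀ q : ℕ,
      Module.finrank K V + Module.finrank K (S j0 ⊓ U : Submodule K V)
        = Module.finrank K (S j0) + Module.finrank K U →
      Module.finrank K V = q + 2 * p →
      Module.finrank K (S j0) ≤ p →
      Module.finrank K U ≤ q + p →
      1 ≤ Module.finrank K (S j0 ⊓ U : Submodule K V) → False := by
    intro q; omega
  exact key (p * p) heq hd ha hb hc
end

section
/- In the repair setup below, for every i ∈ A the node subspace W_i is not contained in the total repair space ∑_{j∈A} S_j; i.e., the set difference W_i ∖ (∑_{j∈A} S_j) is nonempty. -/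
/-- in the repair setup, for every `i ∈ A` the node subspace `W i` is
not contained in the total repair space `∑ j ∈ A, S j`: there is a vector of `W i`
outside of it. -/
theorem stmt8 {K : Type} [Field K] {V : Type} [AddCommGroup V] [Module K V]
    (n k : ℕ) (hk : 2 ≤ k) (hn : k + 1 ≤ n)
    (W : Fin n → Submodule K V)
    (hW : IsERCode k k k (k - 1) (k ^ 2 - 1) W)
    (x : Fin n) (A : Finset (Fin n)) (hx : x ∉ A) (hA : A.card = k)
    (S : Fin n → Submodule K V)
    (hSW : ∀ j ∈ A, S j ≤ W j)
    (hSdim : ∀ j ∈ A, Module.finrank K (S j) ≤ k - 1)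
    (hrep : W x ≤ ∑ j ∈ A, S j)
    :
    ∀ i ∈ A, ∃ v ∈ W i, v ∉ ∑ j ∈ A, S j := by
  classical
  obtain ⟨hfin, hF, hα, hdata, -⟩ := hW
  haveI := hfin
  intro i hi
  rw [← SetLike.not_le_iff_exists]
  intro hle
  -- pick j ∈ A with j ≠ i
  obtain ⟨j, hj, hji⟩ := Finset.exists_mem_ne (by omega : 1 < A.card) i
  set B : Finset (Fin n) := (A.erase j).erase i with hB
  have hiB : i ∉ B := Finset.notMem_erase _ _
  have hiAj : i ∈ A.erase j := Finset.mem_erase.mpr ⟨fun h => hji h.symm, hi⟩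
  have hinsB : insert i B = A.erase j := Finset.insert_erase hiAj
  have hinsA : insert j (A.erase j) = A := Finset.insert_erase hj
  have hjAj : j ∉ A.erase j := Finset.notMem_erase _ _
  have hBsub : B ⊆ A := (Finset.erase_subset _ _).trans (Finset.erase_subset _ _)
  -- the small space M
  set M : Submodule K V := S i ⊔ (S j ⊔ ∑ l ∈ B, W l) with hM
  -- ∑_{l∈A} S l ≤ M
  have hAS : (∑ l ∈ A, S l) ≤ M := by
    rw [← hinsA, Finset.sum_insert hjAj, ← hinsB, Finset.sum_insert hiB]
    rw [Submodule.add_eq_sup, Submodule.add_eq_sup]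
    refine sup_le (le_sup_of_le_right le_sup_left) (sup_le le_sup_left ?_)
    refine le_trans (Finset.sum_le_sum fun l hl => hSW l (hBsub hl)) ?_
    exact le_sup_of_le_right le_sup_right
  -- data recovery on insert x (A.erase j)
  have hxAj : x ∉ A.erase j := fun h => hx (Finset.mem_of_mem_erase h)
  have hcard : (insert x (A.erase j)).card = k := by
    rw [Finset.card_insert_of_notMem hxAj, Finset.card_erase_of_mem hj, hA]
    omega
  have htop : (∑ l ∈ insert x (A.erase j), W l) = ⊤ := hdata _ hcard
  rw [Finset.sum_insert hxAj, Submodule.add_eq_sup] at htop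
  -- ⊤ ≤ M
  have hMtop : M = ⊤ := by
    rw [eq_top_iff, ← htop]
    refine sup_le (le_trans hrep hAS) ?_
    rw [← hinsB, Finset.sum_insert hiB, Submodule.add_eq_sup]
    exact sup_le (le_trans hle hAS) (le_sup_of_le_right le_sup_right)
  -- dimension count
  have hdimB : Module.finrank K (∑ l ∈ B, W l : Submodule K V) ≤ (k - 2) * k := by
    have h1 : Module.finrank K (∑ l ∈ B, W l : Submodule K V)
        ≤ ∑ l ∈ B, Module.finrank K (W l) := by
      induction B using Finset.induction with
      | empty => exact (Submodule.finrank_eq_zero.mpr (by simp)).le.trans (Nat.zero_le _)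
      | @insert a s ha ih =>
        rw [Finset.sum_insert ha, Finset.sum_insert ha, Submodule.add_eq_sup]
        exact le_trans (Submodule.finrank_add_le_finrank_add_finrank _ _)
          (Nat.add_le_add_left ih _)
    have hBcard : B.card = k - 2 := by
      rw [hB, Finset.card_erase_of_mem hiAj, Finset.card_erase_of_mem hj, hA]
      omega
    have h2 : ∑ l ∈ B, Module.finrank K (W l) ≤ (k - 2) * k := by
      calc ∑ l ∈ B, Module.finrank K (W l) ≤ ∑ _l ∈ B, k :=
            Finset.sum_le_sum fun l _ => hα l
        _ = (k - 2) * k := by rw [Finset.sum_const, smul_eq_mul, hBcard]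
    exact le_trans h1 h2
  have hdimM : Module.finrank K M ≤ (k - 1) + ((k - 1) + (k - 2) * k) := by
    refine le_trans (Submodule.finrank_add_le_finrank_add_finrank _ _) ?_
    refine Nat.add_le_add (hSdim i hi) ?_
    refine le_trans (Submodule.finrank_add_le_finrank_add_finrank _ _) ?_
    exact Nat.add_le_add (hSdim j hj) hdimB
  have hMF : Module.finrank K M = k ^ 2 - 1 := by
    rw [hMtop, finrank_top, hF]
  have hkk : k ^ 2 = k * k := sq k
  have e1 : (k - 2) * k = k * k - 2 * k := Nat.sub_mul k 2 k
  have e2 : 4 ≤ k * k := Nat.mul_le_mul hk hk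
  have e3 : 2 * k ≤ k * k := Nat.mul_le_mul_right k hk
  omega
end

section
/- In the repair setup below, suppose for each j ∈ A a nonzero vector u_j ∈ W_j is given with W_j = S_j ⊕ span(u_j). If scalars ξ_j ∈ 𝔽_q and vectors s_j ∈ S_j (j ∈ A) satisfy ∑_{j∈A}(ξ_j u_j + s_j) = 0 and ξ_ℓ u_ℓ + s_ℓ ≠ 0 for at least one ℓ ∈ A, then ξ_j ≠ 0 for every j ∈ A. -/
lemma finrank_finsum_le {K V : Type} [Field K] [AddCommGroup V] [Module K V]
    [FiniteDimensional K V] {ι : Type} (s : Finset ι) (W : ι → Submodule K V)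
    (r : ι → ℕ) (h : ∀ i ∈ s, Module.finrank K (W i) ≤ r i) :
    Module.finrank K ↥(∑ i ∈ s, W i) ≤ ∑ i ∈ s, r i := by
  classical
  induction s using Finset.induction with
  | empty => simp; exact Submodule.finrank_eq_zero.mpr rfl
  | @insert a t ha ih =>
      rw [Finset.sum_insert ha, Finset.sum_insert ha]
      calc Module.finrank K ↥(W a + ∑ i ∈ t, W i)
          ≤ Module.finrank K ↥(W a) + Module.finrank K ↥(∑ i ∈ t, W i) := by
            simpa [Submodule.add_eq_sup] using
              Submodule.finrank_add_le_finrank_add_finrank (W a) (∑ i ∈ t, W i)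
        _ ≤ r a + ∑ i ∈ t, r i :=
            add_le_add (h a (Finset.mem_insert_self a t))
              (ih fun i hi => h i (Finset.mem_insert_of_mem hi))

lemma finsum_le_of_le {K V : Type} [Field K] [AddCommGroup V] [Module K V]
    {ι : Type} (s : Finset ι) (f : ι → Submodule K V) (X : Submodule K V)
    (h : ∀ i ∈ s, f i ≤ X) : ∑ i ∈ s, f i ≤ X := by
  classical
  induction s using Finset.induction with
  | empty => simp
  | @insert a t ha ih =>
      rw [Finset.sum_insert ha, Submodule.add_eq_sup]
      exact sup_le (h a (Finset.mem_insert_self a t))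
        (ih fun i hi => h i (Finset.mem_insert_of_mem hi))

theorem stmt9'
{K : Type} [Field K] {V : Type} [AddCommGroup V] [Module K V]
    (n k : ℕ) (hk : 2 ≤ k)
    (W : Fin n → Submodule K V)
    (hfin : FiniteDimensional K V)
    (hF : Module.finrank K V = k ^ 2 - 1)
    (hα : ∀ i, Module.finrank K (W i) ≤ k)
    (hrec : ∀ A : Finset (Fin n), A.card = k → ∑ j ∈ A, W j = ⊤)
    (x : Fin n) (A : Finset (Fin n)) (hx : x ∉ A) (hA : A.card = k)
    (S : Fin n → Submodule K V)
    (hSW : ∀ j ∈ A, S j ≤ W j)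
    (hSdim : ∀ j ∈ A, Module.finrank K (S j) ≤ k - 1)
    (hrep : W x ≤ ∑ j ∈ A, S j)
    (u : Fin n → V) (huW : ∀ j ∈ A, u j ∈ W j)
    (ξ : Fin n → K) (s : Fin n → V) (hs : ∀ j ∈ A, s j ∈ S j)
    (hsum : ∑ j ∈ A, (ξ j • u j + s j) = 0)
    (hnz : ∃ ℓ ∈ A, ξ ℓ • u ℓ + s ℓ ≠ 0) :
    ∀ j ∈ A, ξ j ≠ 0 := by
  classical
  intro j hj hxi
  obtain ⟨ℓ, hℓ, hne⟩ := hnz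
  set t : Fin n → V := fun i => ξ i • u i + s i with ht
  have htW : ∀ i ∈ A, t i ∈ W i := fun i hi =>
    (W i).add_mem ((W i).smul_mem _ (huW i hi)) (hSW i hi (hs i hi))
  have hTcard : (A.erase j).card = k - 1 := by
    rw [Finset.card_erase_of_mem hj, hA]
  have hxT : x ∉ A.erase j := fun h => hx (Finset.mem_of_mem_erase h)
  have hBcard : (insert x (A.erase j)).card = k := by
    rw [Finset.card_insert_of_notMem hxT, hTcard]; omega
  set P : Submodule K V := ∑ i ∈ A.erase j, W i with hP
  have hWleP : ∀ i ∈ A.erase j, W i ≤ P :=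
    fun i hi => Finset.single_le_sum (f := W) (fun _ _ => zero_le) hi
  have htopB : W x ⊔ P = ⊤ := by
    have := hrec _ hBcard
    rwa [Finset.sum_insert hxT, Submodule.add_eq_sup] at this
  have hSleSP : ∀ i ∈ A, S i ≤ S j ⊔ P := by
    intro i hi
    rcases eq_or_ne i j with rfl | hij
    · exact le_sup_left
    · exact le_sup_of_le_right ((hSW i hi).trans (hWleP i (Finset.mem_erase.mpr ⟨hij, hi⟩)))
  have hTtop : S j ⊔ P = ⊤ := by
    rw [← top_le_iff, ← htopB]
    exact sup_le (hrep.trans (finsum_le_of_le A S _ hSleSP)) le_sup_right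
  have hTopRank : Module.finrank K ↥(⊤ : Submodule K V) = k ^ 2 - 1 := by
    rw [finrank_top, hF]
  have key : ∀ X Y : Submodule K V, X ⊔ Y = ⊤ →
      Module.finrank K X + Module.finrank K Y ≤ Module.finrank K ↥(⊤ : Submodule K V) →
      X ⊓ Y = ⊥ := by
    intro X Y hXY hd
    have h1 := Submodule.finrank_sup_add_finrank_inf_eq X Y
    rw [hXY] at h1
    have h0 : Module.finrank K ↥(X ⊓ Y) = 0 := by omega
    exact Submodule.finrank_eq_zero.mp h0
  have harith1 : (k - 1) + (k - 1) * k = k ^ 2 - 1 := by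
    obtain ⟨m, rfl⟩ : ∃ m, k = m + 2 := ⟨k - 2, by omega⟩
    show (m + 1) + (m + 1) * (m + 2) = (m + 2) ^ 2 - 1
    exact (Nat.sub_eq_of_eq_add (by ring)).symm
  have harith2 : k + ((k - 1) + (k - 2) * k) = k ^ 2 - 1 := by
    obtain ⟨m, rfl⟩ : ∃ m, k = m + 2 := ⟨k - 2, by omega⟩
    show (m + 2) + ((m + 1) + m * (m + 2)) = (m + 2) ^ 2 - 1
    exact (Nat.sub_eq_of_eq_add (by ring)).symm
  have hPrank : Module.finrank K ↥P ≤ (k - 1) * k := by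
    have := finrank_finsum_le (A.erase j) W (fun _ => k)
      (fun i _ => hα i)
    rwa [Finset.sum_const, smul_eq_mul, hTcard] at this
  have hdisj1 : S j ⊓ P = ⊥ := by
    refine key _ _ hTtop ?_
    rw [hTopRank, ← harith1]
    exact add_le_add (hSdim j hj) hPrank
  have hsum' : ∑ i ∈ A, t i = 0 := hsum
  have htj : t j = s j := by simp [ht, hxi]
  have hsplit : t j + ∑ i ∈ A.erase j, t i = 0 := by
    rw [Finset.add_sum_erase A t hj]; exact hsum'
  have hsjP : s j ∈ P := by
    have hsj : s j = -∑ i ∈ A.erase j, t i := by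
      rw [← htj]; exact eq_neg_of_add_eq_zero_left hsplit
    rw [hsj]
    exact P.neg_mem (Submodule.sum_mem _ fun m hm =>
      hWleP m hm (htW m (Finset.mem_of_mem_erase hm)))
  have hsj0 : s j = 0 := by
    have hm : s j ∈ S j ⊓ P := ⟨hs j hj, hsjP⟩
    rw [hdisj1] at hm
    simpa using hm
  have hsum2 : ∑ i ∈ A.erase j, t i = 0 := by
    have := hsplit
    rw [htj, hsj0, zero_add] at this
    exact this
  have hzero : ∀ i ∈ A.erase j, t i = 0 := by
    intro i hi
    have hiA : i ∈ A := Finset.mem_of_mem_erase hi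
    set E : Submodule K V := ∑ m ∈ (A.erase j).erase i, W m with hE
    have hEcard : ((A.erase j).erase i).card = k - 2 := by
      rw [Finset.card_erase_of_mem hi, hTcard]; omega
    have hPsplit : P = W i ⊔ E := by
      rw [hP, ← Finset.add_sum_erase _ W hi, Submodule.add_eq_sup, hE]
    have hQtop : W i ⊔ (S j ⊔ E) = ⊤ := by
      rw [sup_left_comm, ← hPsplit, hTtop]
    have hErank : Module.finrank K ↥E ≤ (k - 2) * k := by
      have := finrank_finsum_le ((A.erase j).erase i) W (fun _ => k)
        (fun m _ => hα m)
      rwa [Finset.sum_const, smul_eq_mul, hEcard] at this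
    have hQrank : Module.finrank K ↥(S j ⊔ E) ≤ (k - 1) + (k - 2) * k :=
      (Submodule.finrank_add_le_finrank_add_finrank (S j) E).trans
        (add_le_add (hSdim j hj) hErank)
    have hdisj2 : W i ⊓ (S j ⊔ E) = ⊥ := by
      refine key _ _ hQtop ?_
      rw [hTopRank, ← harith2]
      exact add_le_add (hα i) hQrank
    have hti : t i = -∑ m ∈ ((A.erase j).erase i), t m := by
      have := Finset.add_sum_erase (A.erase j) t hi
      rw [hsum2] at this
      exact eq_neg_of_add_eq_zero_left this
    have h2 : t i ∈ S j ⊔ E := by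
      rw [hti]
      refine (S j ⊔ E).neg_mem (Submodule.sum_mem _ fun m hm => ?_)
      have hmE : W m ≤ E := by
        rw [hE]; exact Finset.single_le_sum (f := W) (fun _ _ => zero_le) hm
      exact (le_sup_right : E ≤ S j ⊔ E)
        (hmE (htW m (Finset.mem_of_mem_erase (Finset.mem_of_mem_erase hm))))
    have hm : t i ∈ W i ⊓ (S j ⊔ E) := ⟨htW i hiA, h2⟩
    rw [hdisj2] at hm
    simpa using hm
  rcases eq_or_ne ℓ j with rfl | hlj
  · exact hne (by show t ℓ = 0; rw [htj, hsj0])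
  · exact hne (hzero ℓ (Finset.mem_erase.mpr ⟨hlj, hℓ⟩))

/-- in the repair setup, given nonzero `u j ∈ W j` with
`W j = S j ⊕ span {u j}` for each `j ∈ A`, if scalars `ξ j` and vectors `s j ∈ S j`
satisfy `∑ j ∈ A, (ξ j • u j + s j) = 0` with at least one summand nonzero, then
`ξ j ≠ 0` for every `j ∈ A`. -/
theorem stmt9 {K : Type} [Field K] {V : Type} [AddCommGroup V] [Module K V]
    (n k : ℕ) (hk : 2 ≤ k) (hn : k + 1 ≤ n)
    (W : Fin n → Submodule K V)
    (hW : IsERCode k k k (k - 1) (k ^ 2 - 1) W)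
    (x : Fin n) (A : Finset (Fin n)) (hx : x ∉ A) (hA : A.card = k)
    (S : Fin n → Submodule K V)
    (hSW : ∀ j ∈ A, S j ≤ W j)
    (hSdim : ∀ j ∈ A, Module.finrank K (S j) ≤ k - 1)
    (hrep : W x ≤ ∑ j ∈ A, S j)
    (u : Fin n → V)
    (hu0 : ∀ j ∈ A, u j ≠ 0) (huW : ∀ j ∈ A, u j ∈ W j)
    (huds : ∀ j ∈ A, Disjoint (S j) (Submodule.span K {u j}) ∧
      S j ⊔ Submodule.span K {u j} = W j)
    (ξ : Fin n → K) (s : Fin n → V) (hs : ∀ j ∈ A, s j ∈ S j)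
    (hsum : ∑ j ∈ A, (ξ j • u j + s j) = 0)
    (hnz : ∃ ℓ ∈ A, ξ ℓ • u ℓ + s ℓ ≠ 0) :
    ∀ j ∈ A, ξ j ≠ 0 := by
  obtain ⟨hfin, hF, hα, hrec, -⟩ := hW
  exact stmt9' n k hk W hfin hF hα hrec x A hx hA S hSW hSdim hrep u huW ξ s hs hsum hnz
end

section
/- In the repair setup below, let t_j ∈ W_j (j ∈ A) be nonzero vectors satisfying ∑_{j∈A} t_j = 0 and W_j = S_j ⊕ span(t_j) for every j ∈ A, and set T := span{t_j : j ∈ A}. Then dim(∑_{j∈A} S_j) = k(k−1), and the ambient space decomposes as the internal direct sum 𝓕 = (∑_{j∈A} S_j) ⊕ T. -/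
/-- finrank of a finite sum of submodules is at most the sum of the finranks. -/
lemma finrank_finsetSum_le {K : Type} [Field K] {V : Type} [AddCommGroup V] [Module K V]
    [FiniteDimensional K V] {ι : Type} (A : Finset ι) (f : ι → Submodule K V) :
    Module.finrank K ↥(∑ j ∈ A, f j) ≤ ∑ j ∈ A, Module.finrank K ↥(f j) := by
  classical
  induction A using Finset.induction with
  | empty => simp; exact Submodule.finrank_eq_zero.mpr rfl
  | insert _ _ h ih =>
    rw [Finset.sum_insert h, Finset.sum_insert h, Submodule.add_eq_sup]
    exact le_trans (Submodule.finrank_add_le_finrank_add_finrank _ _)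
      (Nat.add_le_add_left ih _)

/-- A finite sum of submodules is below `P` iff each summand is. -/
lemma finsetSum_le {K : Type} [Field K] {V : Type} [AddCommGroup V] [Module K V]
    {ι : Type} (A : Finset ι) (f : ι → Submodule K V) (P : Submodule K V)
    (h : ∀ j ∈ A, f j ≤ P) : ∑ j ∈ A, f j ≤ P := by
  classical
  induction A using Finset.induction with
  | empty => simp
  | insert _ _ hj ih =>
    rw [Finset.sum_insert hj, Submodule.add_eq_sup]
    exact sup_le (h _ (Finset.mem_insert_self _ _))
      (ih fun j hjA => h j (Finset.mem_insert_of_mem hjA))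

lemma le_finsetSum {K : Type} [Field K] {V : Type} [AddCommGroup V] [Module K V]
    {ι : Type} (A : Finset ι) (f : ι → Submodule K V) {j : ι} (hj : j ∈ A) :
    f j ≤ ∑ i ∈ A, f i := by
  classical
  induction A using Finset.induction with
  | empty => simp at hj
  | insert _ _ hi ih =>
    rw [Finset.sum_insert hi, Submodule.add_eq_sup]
    rcases Finset.mem_insert.mp hj with rfl | hj'
    · exact le_sup_left
    · exact le_trans (ih hj') le_sup_right

/-- in the repair setup, with `t` as in Statement 5 and
`T = span {t j : j ∈ A}`, the total repair space has dimension `k * (k - 1)` and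
the ambient space is the internal direct sum `(∑ j ∈ A, S j) ⊕ T`. -/
theorem stmt10 {K : Type} [Field K] {V : Type} [AddCommGroup V] [Module K V]
    (n k : ℕ) (hk : 2 ≤ k) (hn : k + 1 ≤ n)
    (W : Fin n → Submodule K V)
    (hW : IsERCode k k k (k - 1) (k ^ 2 - 1) W)
    (x : Fin n) (A : Finset (Fin n)) (hx : x ∉ A) (hA : A.card = k)
    (S : Fin n → Submodule K V)
    (hSW : ∀ j ∈ A, S j ≤ W j)
    (hSdim : ∀ j ∈ A, Module.finrank K (S j) ≤ k - 1)
    (hrep : W x ≤ ∑ j ∈ A, S j)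
    (t : Fin n → V)
    (ht0 : ∀ j ∈ A, t j ≠ 0) (htW : ∀ j ∈ A, t j ∈ W j)
    (htsum : ∑ j ∈ A, t j = 0)
    (htds : ∀ j ∈ A, Disjoint (S j) (Submodule.span K {t j}) ∧
      S j ⊔ Submodule.span K {t j} = W j)
    :
    Module.finrank K ↥(∑ j ∈ A, S j) = k * (k - 1) ∧
    Disjoint (∑ j ∈ A, S j) (Submodule.span K (t '' ↑A)) ∧
    (∑ j ∈ A, S j) ⊔ Submodule.span K (t '' ↑A) = ⊤ := by
  classical
  obtain ⟨hfin, hF, hα, hdata, hrepair⟩ := hW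
  haveI := hfin
  set P : Submodule K V := ∑ j ∈ A, S j with hP
  set T : Submodule K V := Submodule.span K (t '' ↑A) with hT
  -- T as a sum of spans of singletons
  have hTsum : T = ∑ j ∈ A, Submodule.span K {t j} := by
    apply le_antisymm
    · rw [hT, Submodule.span_le]
      rintro _ ⟨j, hj, rfl⟩
      exact le_finsetSum A _ hj (Submodule.mem_span_singleton_self (t j))
    · refine finsetSum_le _ _ _ fun j hj => ?_
      rw [hT, Submodule.span_le]
      rintro _ rfl
      exact Submodule.subset_span ⟨j, hj, rfl⟩
  -- the sup is everything
  have htop : P ⊔ T = ⊤ := by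
    rw [hTsum, ← Submodule.add_eq_sup, hP, ← Finset.sum_add_distrib]
    rw [← hdata A hA]
    refine Finset.sum_congr rfl fun j hj => ?_
    rw [Submodule.add_eq_sup, (htds j hj).2]
  -- dimension bound for P
  have hPle : Module.finrank K P ≤ k * (k - 1) := by
    calc Module.finrank K P ≤ ∑ j ∈ A, Module.finrank K (S j) :=
          finrank_finsetSum_le A S
      _ ≤ ∑ _j ∈ A, (k - 1) := Finset.sum_le_sum hSdim
      _ = k * (k - 1) := by rw [Finset.sum_const, hA, smul_eq_mul]
  -- dimension bound for T
  have hAne : A.Nonempty := Finset.card_pos.mp (by omega)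
  obtain ⟨j0, hj0⟩ := hAne
  have hTle : Module.finrank K T ≤ k - 1 := by
    have herase : T = Submodule.span K (t '' ↑(A.erase j0)) := by
      apply le_antisymm
      · rw [hT, Submodule.span_le]
        rintro _ ⟨j, hj, rfl⟩
        by_cases hjj : j = j0
        · subst hjj
          have hsplit : t j = -∑ i ∈ A.erase j, t i := by
            have := Finset.add_sum_erase A t hj
            rw [htsum] at this
            exact eq_neg_of_add_eq_zero_left this
          rw [hsplit]
          refine neg_mem (Submodule.sum_mem _ fun i hi => ?_)
          exact Submodule.subset_span ⟨i, hi, rfl⟩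
        · exact Submodule.subset_span ⟨j, Finset.mem_erase.mpr ⟨hjj, hj⟩, rfl⟩
      · exact Submodule.span_mono (Set.image_mono (by simp [Finset.erase_subset]))
    rw [herase]
    have himg : (t '' ↑(A.erase j0)) = ↑((A.erase j0).image t) := by
      simp [Finset.coe_image]
    rw [himg]
    calc Module.finrank K (Submodule.span K ((A.erase j0).image t : Set V))
        ≤ ((A.erase j0).image t).card := finrank_span_finset_le_card _
      _ ≤ (A.erase j0).card := Finset.card_image_le
      _ = k - 1 := by rw [Finset.card_erase_of_mem hj0, hA]
  -- arithmetic
  have karith : k * (k - 1) + (k - 1) = k ^ 2 - 1 := by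
    obtain ⟨m, rfl⟩ := Nat.exists_eq_add_of_le hk
    have h1 : 2 + m - 1 = m + 1 := by omega
    have h2 : (2 + m) ^ 2 - 1 = m * m + 4 * m + 3 := by
      have : (2 + m) ^ 2 = m * m + 4 * m + 4 := by ring
      omega
    have h3 : (2 + m) * (m + 1) + (m + 1) = m * m + 4 * m + 3 := by ring
    rw [h1, h2, h3]
  -- total dimension
  have hTopDim : Module.finrank K ↥(P ⊔ T) = k ^ 2 - 1 := by
    rw [htop, finrank_top, hF]
  have hsuple : Module.finrank K ↥(P ⊔ T) ≤ Module.finrank K P + Module.finrank K T :=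
    Submodule.finrank_add_le_finrank_add_finrank P T
  have hPeq : Module.finrank K P = k * (k - 1) := by omega
  have hTeq : Module.finrank K T = k - 1 := by omega
  have hinf : Module.finrank K ↥(P ⊓ T) = 0 := by
    have := Submodule.finrank_sup_add_finrank_inf_eq P T
    omega
  have hdisj : Disjoint P T := by
    rw [disjoint_iff]
    exact Submodule.finrank_eq_zero.mp hinf
  exact ⟨hPeq, hdisj, htop⟩
end

section
/- In the well-aligned setup below, if W_⋆ is well-aligned with respect to (A;x), then the data-recovery property holds for every k-subset of {W_j : j ∈ A} ∪ {W_⋆} containing W_⋆: for every ℓ ∈ A, W_⋆ + ∑_{j∈A∖{ℓ}} W_j = 𝓕. -/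
/-- `Wst` is well-aligned with respect to `(A; x)`, for a fixed choice of repair
subspaces `S j ⊆ W j` (`j ∈ A`) and the subspace `T`: `Wst` is spanned by `k`
vectors `w i = (∑ j ∈ A, s i j) + τ i` with `s i j ∈ S j` and `τ i ∈ T`, such that
for every `j ∈ A` one of the `s i j` vanishes and the remaining `k - 1` of them
are linearly independent. -/
def WellAligned {K : Type} [Field K] {V : Type} [AddCommGroup V] [Module K V]
    {n : ℕ} (k : ℕ) (A : Finset (Fin n))
    (S : Fin n → Submodule K V) (T : Submodule K V)
    (Wst : Submodule K V) : Prop :=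
  ∃ (w : Fin k → V) (s : Fin k → Fin n → V) (τ : Fin k → V),
    Wst = Submodule.span K (Set.range w) ∧
    (∀ (i : Fin k), ∀ j ∈ A, s i j ∈ S j) ∧
    (∀ i : Fin k, τ i ∈ T) ∧
    (∀ i : Fin k, w i = (∑ j ∈ A, s i j) + τ i) ∧
    (∀ j ∈ A, ∃ ij : Fin k, s ij j = 0 ∧
      LinearIndependent K (fun i : {i : Fin k // i ≠ ij} => s i.1 j))

/-- in the well-aligned setup, `Wst` together with any `k - 1` of the
nodes in `A` spans the ambient space: for every `ℓ ∈ A`,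
`Wst + ∑_{j ∈ A \ {ℓ}} W j = 𝓕`. -/
theorem stmt14 {K : Type} [Field K] {V : Type} [AddCommGroup V] [Module K V]
    (n k : ℕ) (hk : 2 ≤ k) (hn : k + 1 ≤ n)
    (W : Fin n → Submodule K V)
    (hW : IsERCode k k k (k - 1) (k ^ 2 - 1) W)
    (x : Fin n) (A : Finset (Fin n)) (hx : x ∉ A) (hA : A.card = k)
    (S : Fin n → Submodule K V)
    (hSW : ∀ j ∈ A, S j ≤ W j)
    (hSdim : ∀ j ∈ A, Module.finrank K (S j) = k - 1)
    (hrep : W x ≤ ∑ j ∈ A, S j)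
    (t : Fin n → V)
    (ht0 : ∀ j ∈ A, t j ≠ 0) (htW : ∀ j ∈ A, t j ∈ W j)
    (htsum : ∑ j ∈ A, t j = 0)
    (htds : ∀ j ∈ A, Disjoint (S j) (Submodule.span K {t j}) ∧
      S j ⊔ Submodule.span K {t j} = W j)
    (Wst : Submodule K V)
    (hWA : WellAligned k A S (Submodule.span K (t '' ↑A)) Wst)
    :
    ∀ ℓ ∈ A, Wst ⊔ ∑ j ∈ A.erase ℓ, W j = ⊤ := by
  classical
  intro l hl
  obtain ⟨w, s, τ, hWst, hsS, hτT, hw, hind⟩ := hWA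
  haveI : FiniteDimensional K V := hW.1
  set U := Wst ⊔ ∑ j ∈ A.erase l, W j with hUdef
  have hWle : ∀ j ∈ A.erase l, W j ≤ U := fun j hj =>
    le_trans (Finset.single_le_sum (fun i _ => bot_le) hj) le_sup_right
  have hTU : Submodule.span K (t '' ↑A) ≤ U := by
    rw [Submodule.span_le]
    rintro v ⟨j, hj, rfl⟩
    simp only [Finset.mem_coe] at hj
    by_cases hjl : j = l
    · subst hjl
      have heq : t j = -∑ i ∈ A.erase j, t i := by
        have h := Finset.add_sum_erase A t hj
        rw [htsum] at h
        linear_combination (norm := module) h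
      rw [heq]
      exact neg_mem (Submodule.sum_mem _ (fun i hi => hWle i hi (htW i (Finset.mem_of_mem_erase hi))))
    · exact hWle j (Finset.mem_erase.mpr ⟨hjl, hj⟩) (htW j hj)
  have hsU : ∀ i : Fin k, s i l ∈ U := by
    intro i
    have heq : s i l = w i - τ i - ∑ j ∈ A.erase l, s i j := by
      rw [hw i, ← Finset.add_sum_erase A (s i) hl]
      abel
    rw [heq]
    have hwU : w i ∈ U := le_sup_left (a := Wst) (hWst ▸ Submodule.subset_span ⟨i, rfl⟩)
    refine sub_mem (sub_mem hwU (hTU (hτT i))) ?_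
    exact Submodule.sum_mem _ (fun j hj => hWle j hj
      (hSW j (Finset.mem_of_mem_erase hj) (hsS i j (Finset.mem_of_mem_erase hj))))
  obtain ⟨ij, h0, hLI⟩ := hind l hl
  have hne : Nonempty {i : Fin k // i ≠ ij} := by
    obtain ⟨i, hi⟩ := Fintype.exists_ne_of_one_lt_card (by rw [Fintype.card_fin]; omega) ij
    exact ⟨⟨i, hi⟩⟩
  have hcard : Fintype.card {i : Fin k // i ≠ ij} = k - 1 := by
    simp [Fintype.card_subtype_compl, Fintype.card_subtype_eq]
  set s' : {i : Fin k // i ≠ ij} → S l := fun i => ⟨s i.1 l, hsS i.1 l hl⟩ with hs'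
  have hLI' : LinearIndependent K s' := by
    apply LinearIndependent.of_comp (S l).subtype
    exact hLI
  have hspan : Submodule.span K (Set.range s') = ⊤ :=
    LinearIndependent.span_eq_top_of_card_eq_finrank hLI'
      (hcard.trans (hSdim l hl).symm)
  have hSl : S l ≤ U := by
    have h1 : S l = Submodule.map (S l).subtype (Submodule.span K (Set.range s')) := by
      rw [hspan, Submodule.map_top, Submodule.range_subtype]
    rw [h1, Submodule.map_span, Submodule.span_le]
    rintro v ⟨_, ⟨i, rfl⟩, rfl⟩
    exact hsU i.1
  have hWl : W l ≤ U := by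
    rw [← (htds l hl).2]
    refine sup_le hSl (le_trans ?_ hTU)
    exact Submodule.span_mono (Set.singleton_subset_iff.mpr ⟨l, hl, rfl⟩)
  have htop := hW.2.2.2.1 A hA
  rw [← Finset.add_sum_erase A W hl] at htop
  rw [eq_top_iff, ← htop, Submodule.add_eq_sup]
  exact sup_le hWl le_sup_right
end
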